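/- (Zero covariance of the two exchange sums.) Let n_x, n_y ≥ 1, N = n_x + n_y, fix real data vectors x = (x_1,...,x_{n_x}) and y = (y_1,...,y_{n_y}), and fix m with 0 ≤ m ≤ min(n_x, n_y). Let π be uniform on Π(m), and define W_x(π) = Σ_i δ_{x,i} x_i and W_y(π) = Σ_j δ_{y,j} y_j. Then E[W_x · W_y] = E[W_x] · E[W_y]; that is, Cov(W_x, W_y) = 0. -/

import Mathlib

open Finset

/-- Distance between a permutation and the observed ordering: the number of the
first `nx` indices that `π` maps outside the first `nx` positions. -/
def pdist (nx ny : ℕ) (π : Equiv.Perm (Fin (nx + ny))) : ℕ :=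
  nx - (Finset.univ.filter (fun i : Fin nx => ((π (Fin.castAdd ny i)) : ℕ) < nx)).card

/-- The partition `Π(m)`: the set of permutations at distance `m`. -/
def PartM (nx ny m : ℕ) : Finset (Equiv.Perm (Fin (nx + ny))) :=
  Finset.univ.filter (fun π => pdist nx ny π = m)

/-- Expectation of `f` under the uniform distribution on a finite set `s`. -/
noncomputable def uexp {α : Type*} (s : Finset α) (f : α → ℝ) : ℝ :=
  (∑ a ∈ s, f a) / s.card

/-- Variance of `f` under the uniform distribution on a finite set `s`. -/
noncomputable def fvar {α : Type*} (s : Finset α) (f : α → ℝ) : ℝ :=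
  uexp s (fun a => (f a - uexp s f) ^ 2)

/-- Covariance of `f` and `g` under the uniform distribution on a finite set `s`. -/
noncomputable def fcov {α : Type*} (s : Finset α) (f g : α → ℝ) : ℝ :=
  uexp s (fun a => (f a - uexp s f) * (g a - uexp s g))

/-- Indicator that observation `i` of group x is exchanged out of group x under `π`. -/
def deltaX (nx ny : ℕ) (π : Equiv.Perm (Fin (nx + ny))) (i : Fin nx) : ℝ :=
  if nx ≤ ((π (Fin.castAdd ny i)) : ℕ) then 1 else 0

/-- Indicator that observation `j` of group y is exchanged into group x under `π`. -/
def deltaY (nx ny : ℕ) (π : Equiv.Perm (Fin (nx + ny))) (j : Fin ny) : ℝ :=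
  if ((π (Fin.natAdd nx j)) : ℕ) < nx then 1 else 0

/-- Sum of the x-observations exchanged out of group x. -/
noncomputable def Wx (nx ny : ℕ) (x : Fin nx → ℝ) (π : Equiv.Perm (Fin (nx + ny))) : ℝ :=
  ∑ i : Fin nx, deltaX nx ny π i * x i

/-- Sum of the y-observations exchanged into group x. -/
noncomputable def Wy (nx ny : ℕ) (y : Fin ny → ℝ) (π : Equiv.Perm (Fin (nx + ny))) : ℝ :=
  ∑ j : Fin ny, deltaY nx ny π j * y j

/-- Mean of the first `nx` entries of the permuted dataset `z*` (where `z*_{π i} = z i`). -/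
noncomputable def xstar (nx ny : ℕ) (z : Fin (nx + ny) → ℝ) (π : Equiv.Perm (Fin (nx + ny))) : ℝ :=
  (∑ i : Fin nx, z (π.symm (Fin.castAdd ny i))) / nx

/-- Mean of the last `ny` entries of the permuted dataset `z*` (where `z*_{π i} = z i`). -/
noncomputable def ystar (nx ny : ℕ) (z : Fin (nx + ny) → ℝ) (π : Equiv.Perm (Fin (nx + ny))) : ℝ :=
  (∑ j : Fin ny, z (π.symm (Fin.natAdd nx j))) / ny

/-- `W(π) = W_y(π) - W_x(π)` computed from the pooled data `z`. -/
noncomputable def WZ (nx ny : ℕ) (z : Fin (nx + ny) → ℝ) (π : Equiv.Perm (Fin (nx + ny))) : ℝ :=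
  (∑ j : Fin ny, deltaY nx ny π j * z (Fin.natAdd nx j))
    - (∑ i : Fin nx, deltaX nx ny π i * z (Fin.castAdd ny i))


section Aux
variable {nx ny m : ℕ}

lemma ca_inj : Function.Injective (Fin.castAdd ny : Fin nx → Fin (nx+ny)) :=
  fun a b h => Fin.ext (by simpa using congrArg Fin.val h)

lemma na_inj : Function.Injective (Fin.natAdd nx : Fin ny → Fin (nx+ny)) :=
  fun a b h => Fin.ext (by simpa using congrArg Fin.val h)

lemma ca_ne_na (i : Fin nx) (j : Fin ny) : Fin.castAdd ny i ≠ Fin.natAdd nx j := by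
  intro h
  have := congrArg Fin.val h
  simp at this
  omega

lemma swap_ca (i i' k : Fin nx) :
    Equiv.swap (Fin.castAdd ny i) (Fin.castAdd ny i') (Fin.castAdd ny k)
      = Fin.castAdd ny (Equiv.swap i i' k) := by
  rcases eq_or_ne k i with rfl | h1
  · simp
  rcases eq_or_ne k i' with rfl | h2
  · simp
  rw [Equiv.swap_apply_of_ne_of_ne (ca_inj.ne h1) (ca_inj.ne h2),
      Equiv.swap_apply_of_ne_of_ne h1 h2]

lemma swap_na (j j' l : Fin ny) :
    Equiv.swap (Fin.natAdd nx j) (Fin.natAdd nx j') (Fin.natAdd nx l)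
      = Fin.natAdd nx (Equiv.swap j j' l) := by
  rcases eq_or_ne l j with rfl | h1
  · simp
  rcases eq_or_ne l j' with rfl | h2
  · simp
  rw [Equiv.swap_apply_of_ne_of_ne (na_inj.ne h1) (na_inj.ne h2),
      Equiv.swap_apply_of_ne_of_ne h1 h2]

lemma swapX_na (i i' : Fin nx) (j : Fin ny) :
    Equiv.swap (Fin.castAdd ny i) (Fin.castAdd ny i') (Fin.natAdd nx j) = Fin.natAdd nx j :=
  Equiv.swap_apply_of_ne_of_ne (Ne.symm (ca_ne_na i j)) (Ne.symm (ca_ne_na i' j))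

lemma swapY_ca (j j' : Fin ny) (i : Fin nx) :
    Equiv.swap (Fin.natAdd nx j) (Fin.natAdd nx j') (Fin.castAdd ny i) = Fin.castAdd ny i :=
  Equiv.swap_apply_of_ne_of_ne (ca_ne_na i j) (ca_ne_na i j')

/-- If `σ` permutes the first block among itself (via `τ`), `pdist` is invariant. -/
lemma pdist_mul (σ : Equiv.Perm (Fin (nx+ny))) (τ : Equiv.Perm (Fin nx))
    (hσ : ∀ i : Fin nx, σ (Fin.castAdd ny i) = Fin.castAdd ny (τ i))
    (π : Equiv.Perm (Fin (nx+ny))) :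
    pdist nx ny (π * σ) = pdist nx ny π := by
  unfold pdist
  congr 1
  rw [Finset.card_filter, Finset.card_filter]
  calc ∑ i : Fin nx, (if (((π * σ) (Fin.castAdd ny i) : ℕ) < nx) then 1 else 0)
      = ∑ i : Fin nx, (if ((π (Fin.castAdd ny (τ i)) : ℕ) < nx) then 1 else 0) := by
        simp [Equiv.Perm.mul_apply, hσ]
    _ = _ := Equiv.sum_comp τ (fun k => if ((π (Fin.castAdd ny k) : ℕ) < nx) then 1 else 0)

lemma sum_mul_right (σ : Equiv.Perm (Fin (nx+ny))) (τ : Equiv.Perm (Fin nx))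
    (hσ : ∀ i : Fin nx, σ (Fin.castAdd ny i) = Fin.castAdd ny (τ i))
    (f : Equiv.Perm (Fin (nx+ny)) → ℝ) :
    ∑ π ∈ PartM nx ny m, f (π * σ) = ∑ π ∈ PartM nx ny m, f π := by
  have hσ' : ∀ i : Fin nx, σ⁻¹ (Fin.castAdd ny i) = Fin.castAdd ny (τ⁻¹ i) := by
    intro i
    have := hσ (τ⁻¹ i)
    rw [← Equiv.Perm.mul_apply τ τ⁻¹ i, mul_inv_cancel, Equiv.Perm.one_apply] at this
    rw [← this, ← Equiv.Perm.mul_apply σ⁻¹ σ, inv_mul_cancel, Equiv.Perm.one_apply]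
  apply Finset.sum_bij' (fun π _ => π * σ) (fun π _ => π * σ⁻¹)
  · intro π hπ
    simp only [PartM, Finset.mem_filter, Finset.mem_univ, true_and] at hπ ⊢
    rw [pdist_mul σ τ hσ]; exact hπ
  · intro π hπ
    simp only [PartM, Finset.mem_filter, Finset.mem_univ, true_and] at hπ ⊢
    rw [pdist_mul σ⁻¹ τ⁻¹ hσ']; exact hπ
  · intro π _; group
  · intro π _; group
  · intro π _; rfl

lemma mem_PartM {π : Equiv.Perm (Fin (nx+ny))} : π ∈ PartM nx ny m ↔ pdist nx ny π = m := by
  simp [PartM]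

lemma card_ca_filter {π : Equiv.Perm (Fin (nx+ny))} (hπ : π ∈ PartM nx ny m) (hmx : m ≤ nx) :
    ((univ : Finset (Fin nx)).filter (fun i => ((π (Fin.castAdd ny i)) : ℕ) < nx)).card
      = nx - m := by
  have h1 := mem_PartM.mp hπ
  have h2 : ((univ : Finset (Fin nx)).filter
      (fun i => ((π (Fin.castAdd ny i)) : ℕ) < nx)).card ≤ nx := by
    calc _ ≤ (univ : Finset (Fin nx)).card := Finset.card_filter_le _ _
    _ = nx := by simp
  unfold pdist at h1
  omega

lemma sum_deltaX {π : Equiv.Perm (Fin (nx+ny))} (hπ : π ∈ PartM nx ny m) (hmx : m ≤ nx) :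
    ∑ i : Fin nx, deltaX nx ny π i = (m : ℝ) := by
  unfold deltaX
  rw [Finset.sum_boole]
  have : (univ : Finset (Fin nx)).filter (fun i => nx ≤ ((π (Fin.castAdd ny i)) : ℕ))
      = (univ : Finset (Fin nx)).filter (fun i => ¬ ((π (Fin.castAdd ny i)) : ℕ) < nx) := by
    simp [not_lt]
  rw [this, Finset.filter_not, Finset.card_sdiff_of_subset (Finset.filter_subset _ _),
      card_ca_filter hπ hmx, Finset.card_univ, Fintype.card_fin]
  congr 1
  omega

lemma sum_deltaY {π : Equiv.Perm (Fin (nx+ny))} (hπ : π ∈ PartM nx ny m) (hmx : m ≤ nx) :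
    ∑ j : Fin ny, deltaY nx ny π j = (m : ℝ) := by
  unfold deltaY
  rw [Finset.sum_boole]
  have key : ((univ : Finset (Fin nx)).filter
        (fun i => ((π (Fin.castAdd ny i)) : ℕ) < nx)).card
      + ((univ : Finset (Fin ny)).filter
        (fun j => ((π (Fin.natAdd nx j)) : ℕ) < nx)).card = nx := by
    have h1 : ((univ : Finset (Fin (nx+ny))).filter (fun k => ((π k) : ℕ) < nx)).card
        = ((univ : Finset (Fin (nx+ny))).filter (fun k : Fin (nx+ny) => (k : ℕ) < nx)).card := by
      rw [Finset.card_filter, Finset.card_filter]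
      exact Equiv.sum_comp π (fun k => if ((k : ℕ) < nx) then 1 else 0)
    have h2 : ((univ : Finset (Fin (nx+ny))).filter (fun k : Fin (nx+ny) => (k : ℕ) < nx)).card = nx := by
      rw [Finset.card_filter, Fin.sum_univ_add]
      simp
    rw [Finset.card_filter, Fin.sum_univ_add, ← Finset.card_filter, ← Finset.card_filter] at h1
    omega
  rw [card_ca_filter hπ hmx] at key
  have : ((univ : Finset (Fin ny)).filter
      (fun j => ((π (Fin.natAdd nx j)) : ℕ) < nx)).card = m := by omega
  rw [this]

end Aux

section Aux2
variable {nx ny m : ℕ}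

/-- An involution on `Fin nx ⊕ Fin ny` swapping the first `m` elements of each block. -/
def g0fun (nx ny m : ℕ) (hmx : m ≤ nx) (hmy : m ≤ ny) :
    Fin nx ⊕ Fin ny → Fin nx ⊕ Fin ny := fun s =>
  match s with
  | .inl i => if h : (i : ℕ) < m then .inr ⟨i, h.trans_le hmy⟩ else .inl i
  | .inr j => if h : (j : ℕ) < m then .inl ⟨j, h.trans_le hmx⟩ else .inr j

lemma g0fun_inv (hmx : m ≤ nx) (hmy : m ≤ ny) :
    Function.Involutive (g0fun nx ny m hmx hmy) := by
  intro s
  rcases s with i | j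
  · by_cases h : (i : ℕ) < m
    · simp [g0fun, h]
    · simp [g0fun, h]
  · by_cases h : (j : ℕ) < m
    · simp [g0fun, h]
    · simp [g0fun, h]

noncomputable def pi0 (nx ny m : ℕ) (hmx : m ≤ nx) (hmy : m ≤ ny) :
    Equiv.Perm (Fin (nx + ny)) :=
  finSumFinEquiv.permCongr ((g0fun_inv hmx hmy).toPerm)

lemma pi0_ca (hmx : m ≤ nx) (hmy : m ≤ ny) (i : Fin nx) :
    pi0 nx ny m hmx hmy (Fin.castAdd ny i)
      = if h : (i : ℕ) < m then Fin.natAdd nx ⟨i, h.trans_le hmy⟩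
        else Fin.castAdd ny i := by
  rw [pi0, Equiv.permCongr_apply, finSumFinEquiv_symm_apply_castAdd]
  by_cases h : (i : ℕ) < m
  · simp [Function.Involutive.toPerm, g0fun, h]
  · simp [Function.Involutive.toPerm, g0fun, h]

lemma card_filter_lt_fin (nx m : ℕ) (hmx : m ≤ nx) :
    ((univ : Finset (Fin nx)).filter (fun i : Fin nx => (i : ℕ) < m)).card = m := by
  rw [Finset.card_filter, Fin.sum_univ_eq_sum_range (fun k => if k < m then 1 else 0) nx,
      ← Finset.card_filter]
  have : (range nx).filter (fun k => k < m) = range m := by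
    ext k; simp; omega
  rw [this, Finset.card_range]

lemma PartM_nonempty (hmx : m ≤ nx) (hmy : m ≤ ny) : (PartM nx ny m).Nonempty := by
  refine ⟨pi0 nx ny m hmx hmy, mem_PartM.mpr ?_⟩
  unfold pdist
  have : (univ : Finset (Fin nx)).filter
        (fun i => ((pi0 nx ny m hmx hmy (Fin.castAdd ny i)) : ℕ) < nx)
      = (univ : Finset (Fin nx)).filter (fun i : Fin nx => ¬ (i : ℕ) < m) := by
    apply Finset.filter_congr
    intro i _
    rw [pi0_ca hmx hmy i]
    by_cases h : (i : ℕ) < m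
    · simp [h]
    · simp [h]
  rw [this, Finset.filter_not, Finset.card_sdiff_of_subset (Finset.filter_subset _ _),
      card_filter_lt_fin nx m hmx, Finset.card_univ, Fintype.card_fin]
  omega

-- constant sums
lemma sumX_const (i i' : Fin nx) :
    ∑ π ∈ PartM nx ny m, deltaX nx ny π i = ∑ π ∈ PartM nx ny m, deltaX nx ny π i' := by
  have := sum_mul_right (m := m) (Equiv.swap (Fin.castAdd ny i) (Fin.castAdd ny i'))
    (Equiv.swap i i') (fun k => swap_ca i i' k) (fun π => deltaX nx ny π i)
  rw [← this]
  apply Finset.sum_congr rfl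
  intro π _
  unfold deltaX
  rw [Equiv.Perm.mul_apply, swap_ca, Equiv.swap_apply_left]

lemma sumY_const (j j' : Fin ny) :
    ∑ π ∈ PartM nx ny m, deltaY nx ny π j = ∑ π ∈ PartM nx ny m, deltaY nx ny π j' := by
  have := sum_mul_right (m := m) (Equiv.swap (Fin.natAdd nx j) (Fin.natAdd nx j'))
    (1 : Equiv.Perm (Fin nx)) (fun k => by simpa using swapY_ca j j' k)
    (fun π => deltaY nx ny π j)
  rw [← this]
  apply Finset.sum_congr rfl
  intro π _
  unfold deltaY
  rw [Equiv.Perm.mul_apply, swap_na, Equiv.swap_apply_left]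

lemma sumXY_const (i i' : Fin nx) (j j' : Fin ny) :
    ∑ π ∈ PartM nx ny m, deltaX nx ny π i * deltaY nx ny π j
      = ∑ π ∈ PartM nx ny m, deltaX nx ny π i' * deltaY nx ny π j' := by
  have h1 := sum_mul_right (m := m) (Equiv.swap (Fin.castAdd ny i) (Fin.castAdd ny i'))
    (Equiv.swap i i') (fun k => swap_ca i i' k)
    (fun π => deltaX nx ny π i * deltaY nx ny π j)
  have h2 := sum_mul_right (m := m) (Equiv.swap (Fin.natAdd nx j) (Fin.natAdd nx j'))
    (1 : Equiv.Perm (Fin nx)) (fun k => by simpa using swapY_ca j j' k)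
    (fun π => deltaX nx ny π i' * deltaY nx ny π j)
  calc ∑ π ∈ PartM nx ny m, deltaX nx ny π i * deltaY nx ny π j
      = ∑ π ∈ PartM nx ny m, deltaX nx ny π i' * deltaY nx ny π j := by
        rw [← h1]
        apply Finset.sum_congr rfl
        intro π _
        unfold deltaX deltaY
        rw [Equiv.Perm.mul_apply, Equiv.Perm.mul_apply, swap_ca, Equiv.swap_apply_left,
            swapX_na]
    _ = ∑ π ∈ PartM nx ny m, deltaX nx ny π i' * deltaY nx ny π j' := by
        rw [← h2]
        apply Finset.sum_congr rfl
        intro π _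
        unfold deltaX deltaY
        rw [Equiv.Perm.mul_apply, Equiv.Perm.mul_apply, swap_na, Equiv.swap_apply_left,
            swapY_ca]

end Aux2

section Main
variable {nx ny m : ℕ}

lemma sumX_val (hmx : m ≤ nx) (hnx : (nx : ℝ) ≠ 0) (i : Fin nx) :
    ∑ π ∈ PartM nx ny m, deltaX nx ny π i
      = m * (PartM nx ny m).card / nx := by
  rw [eq_div_iff hnx]
  calc (∑ π ∈ PartM nx ny m, deltaX nx ny π i) * nx
      = ∑ i' : Fin nx, ∑ π ∈ PartM nx ny m, deltaX nx ny π i' := by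
        rw [Finset.sum_congr rfl (fun i' (_ : i' ∈ univ) => (sumX_const i' i)),
          Finset.sum_const, Finset.card_univ, Fintype.card_fin, nsmul_eq_mul, mul_comm]
    _ = ∑ π ∈ PartM nx ny m, ∑ i' : Fin nx, deltaX nx ny π i' := Finset.sum_comm
    _ = ∑ π ∈ PartM nx ny m, (m : ℝ) :=
        Finset.sum_congr rfl (fun π hπ => sum_deltaX hπ hmx)
    _ = _ := by rw [Finset.sum_const, nsmul_eq_mul, mul_comm]

lemma sumY_val (hmx : m ≤ nx) (hny : (ny : ℝ) ≠ 0) (j : Fin ny) :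
    ∑ π ∈ PartM nx ny m, deltaY nx ny π j
      = m * (PartM nx ny m).card / ny := by
  rw [eq_div_iff hny]
  calc (∑ π ∈ PartM nx ny m, deltaY nx ny π j) * ny
      = ∑ j' : Fin ny, ∑ π ∈ PartM nx ny m, deltaY nx ny π j' := by
        rw [Finset.sum_congr rfl (fun j' (_ : j' ∈ univ) => (sumY_const j' j)),
          Finset.sum_const, Finset.card_univ, Fintype.card_fin, nsmul_eq_mul, mul_comm]
    _ = ∑ π ∈ PartM nx ny m, ∑ j' : Fin ny, deltaY nx ny π j' := Finset.sum_comm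
    _ = ∑ π ∈ PartM nx ny m, (m : ℝ) :=
        Finset.sum_congr rfl (fun π hπ => sum_deltaY hπ hmx)
    _ = _ := by rw [Finset.sum_const, nsmul_eq_mul, mul_comm]

lemma sumXY_val (hmx : m ≤ nx) (hnx : (nx : ℝ) ≠ 0) (hny : (ny : ℝ) ≠ 0)
    (i : Fin nx) (j : Fin ny) :
    ∑ π ∈ PartM nx ny m, deltaX nx ny π i * deltaY nx ny π j
      = m * m * (PartM nx ny m).card / (nx * ny) := by
  rw [eq_div_iff (mul_ne_zero hnx hny)]
  calc (∑ π ∈ PartM nx ny m, deltaX nx ny π i * deltaY nx ny π j) * (nx * ny)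
      = ∑ i' : Fin nx, ∑ j' : Fin ny,
          ∑ π ∈ PartM nx ny m, deltaX nx ny π i' * deltaY nx ny π j' := by
        rw [Finset.sum_congr rfl (fun i' (_ : i' ∈ univ) =>
          Finset.sum_congr rfl (fun j' (_ : j' ∈ univ) => (sumXY_const i' i j' j)))]
        simp [Finset.sum_const, Finset.card_univ, nsmul_eq_mul]
        ring
    _ = ∑ π ∈ PartM nx ny m, ∑ i' : Fin nx, ∑ j' : Fin ny,
          deltaX nx ny π i' * deltaY nx ny π j' := by
        rw [Finset.sum_congr rfl (fun i' (_ : i' ∈ univ) =>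
          Finset.sum_comm (s := univ) (t := PartM nx ny m)
            (f := fun j' π => deltaX nx ny π i' * deltaY nx ny π j'))]
        exact Finset.sum_comm
    _ = ∑ π ∈ PartM nx ny m, (m : ℝ) * m := by
        apply Finset.sum_congr rfl
        intro π hπ
        rw [← Finset.sum_mul_sum, sum_deltaX hπ hmx, sum_deltaY hπ hmx]
    _ = _ := by rw [Finset.sum_const, nsmul_eq_mul]; ring

lemma fcov_eq {α : Type*} (s : Finset α) (hs : s.Nonempty) (f g : α → ℝ) :
    fcov s f g = uexp s (fun a => f a * g a) - uexp s f * uexp s g := by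
  have hc : (s.card : ℝ) ≠ 0 := Nat.cast_ne_zero.mpr (Finset.card_ne_zero.mpr hs)
  unfold fcov uexp
  have expand : ∀ a ∈ s,
      (f a - (∑ b ∈ s, f b) / s.card) * (g a - (∑ b ∈ s, g b) / s.card)
        = f a * g a - ((∑ b ∈ s, g b) / s.card) * f a
            - ((∑ b ∈ s, f b) / s.card) * g a
            + ((∑ b ∈ s, f b) / s.card) * ((∑ b ∈ s, g b) / s.card) :=
    fun a _ => by ring
  rw [Finset.sum_congr rfl expand]
  simp only [Finset.sum_add_distrib, Finset.sum_sub_distrib, ← Finset.mul_sum,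
    Finset.sum_const, nsmul_eq_mul]
  field_simp
  ring

end Main


/-- under the uniform distribution on `Π(m)`,
`E[W_x W_y] = E[W_x] E[W_y]`, that is, `Cov(W_x, W_y) = 0`. -/
theorem W_cov_zero (nx ny : ℕ) (hx : 1 ≤ nx) (hy : 1 ≤ ny)
    (x : Fin nx → ℝ) (y : Fin ny → ℝ)
    (m : ℕ) (hm : m ≤ min nx ny) :
    uexp (PartM nx ny m) (fun π => Wx nx ny x π * Wy nx ny y π)
        = uexp (PartM nx ny m) (Wx nx ny x) * uexp (PartM nx ny m) (Wy nx ny y)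
    ∧ fcov (PartM nx ny m) (Wx nx ny x) (Wy nx ny y) = 0 := by
  have hmx : m ≤ nx := le_trans hm (min_le_left _ _)
  have hmy : m ≤ ny := le_trans hm (min_le_right _ _)
  have hne : (PartM nx ny m).Nonempty := PartM_nonempty hmx hmy
  have hc : (((PartM nx ny m).card : ℕ) : ℝ) ≠ 0 :=
    Nat.cast_ne_zero.mpr (Finset.card_ne_zero.mpr hne)
  have hnx : (nx : ℝ) ≠ 0 := Nat.cast_ne_zero.mpr (by omega)
  have hny : (ny : ℝ) ≠ 0 := Nat.cast_ne_zero.mpr (by omega)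
  set c : ℝ := ((PartM nx ny m).card : ℝ) with hcdef
  have hWx : ∑ π ∈ PartM nx ny m, Wx nx ny x π
      = (∑ i : Fin nx, x i) * (m * c / nx) := by
    unfold Wx
    rw [Finset.sum_comm]
    rw [Finset.sum_congr rfl (fun i (_ : i ∈ univ) => by
      rw [← Finset.sum_mul, sumX_val hmx hnx i])]
    rw [← Finset.mul_sum]
    ring
  have hWy : ∑ π ∈ PartM nx ny m, Wy nx ny y π
      = (∑ j : Fin ny, y j) * (m * c / ny) := by
    unfold Wy
    rw [Finset.sum_comm]
    rw [Finset.sum_congr rfl (fun j (_ : j ∈ univ) => by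
      rw [← Finset.sum_mul, sumY_val hmx hny j])]
    rw [← Finset.mul_sum]
    ring
  have hWxy : ∑ π ∈ PartM nx ny m, Wx nx ny x π * Wy nx ny y π
      = (∑ i : Fin nx, x i) * (∑ j : Fin ny, y j) * (m * m * c / (nx * ny)) := by
    calc ∑ π ∈ PartM nx ny m, Wx nx ny x π * Wy nx ny y π
        = ∑ π ∈ PartM nx ny m, ∑ i : Fin nx, ∑ j : Fin ny,
            (deltaX nx ny π i * deltaY nx ny π j) * (x i * y j) := by
          apply Finset.sum_congr rfl
          intro π _
          unfold Wx Wy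
          rw [Finset.sum_mul_sum]
          exact Finset.sum_congr rfl (fun i _ => Finset.sum_congr rfl (fun j _ => by ring))
      _ = ∑ i : Fin nx, ∑ j : Fin ny,
            (∑ π ∈ PartM nx ny m, deltaX nx ny π i * deltaY nx ny π j) * (x i * y j) := by
          rw [Finset.sum_comm]
          apply Finset.sum_congr rfl
          intro i _
          rw [Finset.sum_comm]
          exact Finset.sum_congr rfl (fun j _ => (Finset.sum_mul _ _ _).symm)
      _ = ∑ i : Fin nx, ∑ j : Fin ny,
            (m * m * c / (nx * ny)) * (x i * y j) := by
          exact Finset.sum_congr rfl (fun i _ => Finset.sum_congr rfl (fun j _ => by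
            rw [sumXY_val hmx hnx hny i j]))
      _ = _ := by
          rw [mul_comm ((∑ i : Fin nx, x i) * ∑ j : Fin ny, y j),
            Finset.sum_mul_sum univ univ x y, Finset.mul_sum]
          exact Finset.sum_congr rfl (fun i _ => by rw [Finset.mul_sum])
  have h1 : uexp (PartM nx ny m) (fun π => Wx nx ny x π * Wy nx ny y π)
      = uexp (PartM nx ny m) (Wx nx ny x) * uexp (PartM nx ny m) (Wy nx ny y) := by
    unfold uexp
    rw [hWxy, hWx, hWy, ← hcdef]
    field_simp
  exact ⟨h1, by rw [fcov_eq _ hne, h1, sub_self]⟩
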